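/- In the setting of the kernel-based bandit estimator, suppose additionally that the sampling density satisfies $\pi(z) \ge \epsilon/\lambda(X)$ for all $z \in X$ (explicit exploration with mixing weight $\epsilon > 0$), that $0 \le u \le 1$, and that there exist constants $c_m, c_M > 0$ (depending only on $X$) with $c_m \delta^d \le \lambda(N_\delta(x)) \le c_M\delta^d$ for all $x \in X$. Then for any probability density $q$ on $X$, $\mathbb{E}_{Z\sim\pi}\Big[\int_X q(x)\,\hat{u}(x)^2\,dx\Big] \le \frac{\lambda(X)\,c_M}{c_m^2}\,\delta^{-d}\,\epsilon^{-1}$, where $\hat{u}(x) = K^\delta(Z,x)u(Z)/\pi(Z)$. -/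

import Mathlib

open MeasureTheory

/-- second-moment bound `O(δ^{-d} ε^{-1})` for the kernel-based
importance-weighted bandit estimator under explicit exploration. -/
theorem kernel_estimator_second_moment_bound
    {d : ℕ} (X : Set (EuclideanSpace ℝ (Fin d)))
    (hXc : IsCompact X) (hXconv : Convex ℝ X) (hXmeas : MeasurableSet X)
    (hXpos : 0 < (volume X).toReal)
    (u : EuclideanSpace ℝ (Fin d) → ℝ) (hum : Measurable u)
    (hu01 : ∀ z, u z ∈ Set.Icc (0:ℝ) 1)
    (δ : ℝ) (hδ : 0 < δ)
    (Kδ : EuclideanSpace ℝ (Fin d) → EuclideanSpace ℝ (Fin d) → ℝ)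
    (hK : Kδ = fun z x =>
      ((volume (Metric.closedBall x δ ∩ X)).toReal)⁻¹
        * if dist z x ≤ δ then 1 else 0)
    -- two-sided volume bounds on the kernel neighborhoods
    (cm cM : ℝ) (hcm : 0 < cm) (hcM : 0 < cM)
    (hvol : ∀ x ∈ X,
      cm * δ ^ d ≤ (volume (Metric.closedBall x δ ∩ X)).toReal
        ∧ (volume (Metric.closedBall x δ ∩ X)).toReal ≤ cM * δ ^ d)
    -- sampling density `π` on `X` with explicit exploration of weight `ε`
    (ε : ℝ) (hε : 0 < ε)
    (π : EuclideanSpace ℝ (Fin d) → ℝ) (hπm : Measurable π)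
    (hπlb : ∀ z ∈ X, ε / (volume X).toReal ≤ π z)
    (hπ1 : (∫ z in X, π z) = 1)
    -- arbitrary probability density `q` on `X`
    (q : EuclideanSpace ℝ (Fin d) → ℝ) (hqm : Measurable q)
    (hq0 : ∀ x, 0 ≤ q x) (hq1 : (∫ x in X, q x) = 1) :
    (∫ z in X, (∫ x in X, q x * (Kδ z x * u z / π z) ^ 2) * π z)
      ≤ (volume X).toReal * cM / cm ^ 2 * (δ ^ d)⁻¹ * ε⁻¹ := by
  classical
  obtain ⟨x0, hx0⟩ : X.Nonempty := by
    rcases Set.eq_empty_or_nonempty X with h | h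
    · exfalso; rw [h] at hXpos; simp at hXpos
    · exact h
  set lX : ℝ := (volume X).toReal with hlX
  have hδd : (0:ℝ) < δ ^ d := pow_pos hδ d
  have hcmδ : (0:ℝ) < cm * δ ^ d := mul_pos hcm hδd
  have hcmM : cm ≤ cM := by
    have h1 := (hvol x0 hx0).1
    have h2 := (hvol x0 hx0).2
    have := h1.trans h2
    exact le_of_mul_le_mul_right this hδd
  -- notation for the neighborhood volume
  set m : EuclideanSpace ℝ (Fin d) → ℝ := fun x => (volume (Metric.closedBall x δ ∩ X)).toReal with hmdef
  have hmpos : ∀ x ∈ X, 0 < m x := fun x hx => lt_of_lt_of_le hcmδ (hvol x hx).1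
  have hminv : ∀ x ∈ X, (m x)⁻¹ ≤ (cm * δ ^ d)⁻¹ := fun x hx =>
    inv_anti₀ hcmδ (hvol x hx).1
  -- measurability of m
  have hmmeas : Measurable m := by
    have hs : MeasurableSet {p : EuclideanSpace ℝ (Fin d) × EuclideanSpace ℝ (Fin d) | dist p.2 p.1 ≤ δ ∧ p.2 ∈ X} := by
      have h1 : MeasurableSet {p : EuclideanSpace ℝ (Fin d) × EuclideanSpace ℝ (Fin d) | dist p.2 p.1 ≤ δ} :=
        (isClosed_le (continuous_dist.comp (continuous_snd.prodMk continuous_fst))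
          continuous_const).measurableSet
      have h2 : MeasurableSet {p : EuclideanSpace ℝ (Fin d) × EuclideanSpace ℝ (Fin d) | p.2 ∈ X} := measurable_snd hXmeas
      exact h1.inter h2
    have := measurable_measure_prodMk_left (ν := (volume : Measure (EuclideanSpace ℝ (Fin d)))) hs
    have heq : (fun x => (volume : Measure (EuclideanSpace ℝ (Fin d))) (Prod.mk x ⁻¹' {p : EuclideanSpace ℝ (Fin d) × EuclideanSpace ℝ (Fin d) | dist p.2 p.1 ≤ δ ∧ p.2 ∈ X}))
        = fun x => volume (Metric.closedBall x δ ∩ X) := by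
      funext x
      congr 1
    rw [heq] at this
    exact this.ennreal_toReal
  -- π is positive on X
  have hεl : (0:ℝ) < ε / lX := div_pos hε hXpos
  have hπpos : ∀ z ∈ X, 0 < π z := fun z hz => lt_of_lt_of_le hεl (hπlb z hz)
  have hπinv : ∀ z ∈ X, (π z)⁻¹ ≤ lX / ε := by
    intro z hz
    have h1 : (π z)⁻¹ ≤ (ε / lX)⁻¹ := inv_anti₀ hεl (hπlb z hz)
    rwa [inv_div] at h1
  have hlε : (0:ℝ) < lX / ε := div_pos hXpos hε
  -- q is integrable on X
  have hq_int : IntegrableOn q X volume := by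
    by_contra h
    rw [MeasureTheory.integral_undef h] at hq1
    norm_num at hq1
  have hXfin : volume X ≠ ⊤ := hXc.measure_lt_top.ne
  -- the two-variable integrand
  set F : EuclideanSpace ℝ (Fin d) → EuclideanSpace ℝ (Fin d) → ℝ := fun z x =>
    q x * ((m x)⁻¹ * (if dist z x ≤ δ then (1:ℝ) else 0) * u z / π z) ^ 2 * π z with hFdef
  have hKF : ∀ z, (∫ x in X, q x * (Kδ z x * u z / π z) ^ 2) * π z
      = ∫ x in X, F z x := by
    intro z
    rw [hK]
    simp only [hFdef]
    rw [← MeasureTheory.integral_mul_const]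
  -- measurability of uncurried F
  have hFm : Measurable (Function.uncurry F) := by
    have hind : Measurable (fun p : EuclideanSpace ℝ (Fin d) × EuclideanSpace ℝ (Fin d) => if dist p.1 p.2 ≤ δ then (1:ℝ) else 0) := by
      have hset : MeasurableSet {p : EuclideanSpace ℝ (Fin d) × EuclideanSpace ℝ (Fin d) | dist p.1 p.2 ≤ δ} :=
        (isClosed_le (continuous_dist.comp (continuous_fst.prodMk continuous_snd))
          continuous_const).measurableSet
      exact Measurable.ite hset measurable_const measurable_const
    exact ((hqm.comp measurable_snd).mul
      (((((hmmeas.comp measurable_snd).inv.mul hind).mul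
        (hum.comp measurable_fst)).div (hπm.comp measurable_fst)).pow measurable_const)).mul
      (hπm.comp measurable_fst)
  -- integrability of uncurried F on the product
  have hprod_restrict : (volume.restrict X).prod (volume.restrict X)
      = ((volume : Measure (EuclideanSpace ℝ (Fin d))).prod volume).restrict (X ×ˢ X) :=
    Measure.prod_restrict X X
  have hFnn : ∀ z ∈ X, ∀ x, 0 ≤ F z x := by
    intro z hz x
    exact mul_nonneg (mul_nonneg (hq0 x) (sq_nonneg _)) (hπpos z hz).le
  have hbound : ∀ z ∈ X, ∀ x ∈ X,
      F z x ≤ ((cm * δ ^ d)⁻¹ * lX / ε) * (q x * ((m x)⁻¹ * (if dist z x ≤ δ then (1:ℝ) else 0))) := by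
    intro z hz x hx
    have hπz := hπpos z hz
    have hπz' : π z ≠ 0 := ne_of_gt hπz
    show q x * (((m x)⁻¹ * (if dist z x ≤ δ then (1:ℝ) else 0)) * u z / π z) ^ 2 * π z
      ≤ ((cm * δ ^ d)⁻¹ * lX / ε) * (q x * ((m x)⁻¹ * (if dist z x ≤ δ then (1:ℝ) else 0)))
    have hAnn : (0:ℝ) ≤ (m x)⁻¹ * (if dist z x ≤ δ then (1:ℝ) else 0) := by
      have := (hmpos x hx).le
      positivity
    have hA : (m x)⁻¹ * (if dist z x ≤ δ then (1:ℝ) else 0) ≤ (cm * δ ^ d)⁻¹ := by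
      calc (m x)⁻¹ * (if dist z x ≤ δ then (1:ℝ) else 0) ≤ (m x)⁻¹ * 1 := by
            apply mul_le_mul_of_nonneg_left _ (inv_nonneg.2 (hmpos x hx).le)
            split <;> norm_num
        _ = (m x)⁻¹ := mul_one _
        _ ≤ (cm * δ ^ d)⁻¹ := hminv x hx
    set A : ℝ := (m x)⁻¹ * (if dist z x ≤ δ then (1:ℝ) else 0)
    have hu0 := (hu01 z).1
    have hu1 := (hu01 z).2
    have hrw : (A * u z / π z) ^ 2 * π z = (A * u z) ^ 2 * (π z)⁻¹ := by
      field_simp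
    rw [mul_assoc, hrw]
    have h1 : (A * u z) ^ 2 ≤ A * (cm * δ ^ d)⁻¹ := by
      have hAu : A * u z ≤ A := by
        calc A * u z ≤ A * 1 := mul_le_mul_of_nonneg_left hu1 hAnn
          _ = A := mul_one _
      have hAunn : 0 ≤ A * u z := mul_nonneg hAnn hu0
      calc (A * u z) ^ 2 = (A * u z) * (A * u z) := sq (A * u z)
        _ ≤ A * (cm * δ ^ d)⁻¹ := by
            apply mul_le_mul hAu (hAu.trans hA) hAunn hAnn
    have h2 : (π z)⁻¹ ≤ lX / ε := hπinv z hz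
    calc q x * ((A * u z) ^ 2 * (π z)⁻¹)
        ≤ q x * ((A * (cm * δ ^ d)⁻¹) * (lX / ε)) := by
          apply mul_le_mul_of_nonneg_left _ (hq0 x)
          apply mul_le_mul h1 h2 (inv_nonneg.2 hπz.le)
          positivity
      _ = ((cm * δ ^ d)⁻¹ * lX / ε) * (q x * A) := by ring
  -- crude bound used for integrability on the product
  have hbound2 : ∀ z ∈ X, ∀ x ∈ X,
      F z x ≤ ((cm * δ ^ d)⁻¹ * lX / ε) * ((cm * δ ^ d)⁻¹ * q x) := by
    intro z hz x hx
    refine (hbound z hz x hx).trans ?_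
    have hA : (m x)⁻¹ * (if dist z x ≤ δ then (1:ℝ) else 0) ≤ (cm * δ ^ d)⁻¹ := by
      calc (m x)⁻¹ * (if dist z x ≤ δ then (1:ℝ) else 0) ≤ (m x)⁻¹ * 1 := by
            apply mul_le_mul_of_nonneg_left _ (inv_nonneg.2 (hmpos x hx).le)
            split <;> norm_num
        _ = (m x)⁻¹ := mul_one _
        _ ≤ (cm * δ ^ d)⁻¹ := hminv x hx
    have hC : (0:ℝ) ≤ (cm * δ ^ d)⁻¹ * lX / ε := by positivity
    have : q x * ((m x)⁻¹ * (if dist z x ≤ δ then (1:ℝ) else 0)) ≤ (cm * δ ^ d)⁻¹ * q x := by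
      rw [mul_comm ((cm * δ ^ d)⁻¹) (q x)]
      exact mul_le_mul_of_nonneg_left hA (hq0 x)
    exact mul_le_mul_of_nonneg_left this hC
  have hFint : Integrable (Function.uncurry F)
      ((volume.restrict X).prod (volume.restrict X)) := by
    have hg : Integrable (fun p : EuclideanSpace ℝ (Fin d) × EuclideanSpace ℝ (Fin d) => ((cm * δ ^ d)⁻¹ * lX / ε) * ((cm * δ ^ d)⁻¹ * q p.2))
        ((volume.restrict X).prod (volume.restrict X)) := by
      have h1 : Integrable (fun p : EuclideanSpace ℝ (Fin d) × EuclideanSpace ℝ (Fin d) => q p.2)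
          ((volume.restrict X).prod (volume.restrict X)) := by
        have hmap : Measure.map Prod.snd ((volume.restrict X).prod (volume.restrict X))
            = (volume.restrict X) Set.univ • (volume.restrict X) := Measure.map_snd_prod
        have h2 : Integrable q ((volume.restrict X) Set.univ • (volume.restrict X)) := by
          apply Integrable.smul_measure hq_int
          rw [Measure.restrict_apply_univ]
          exact hXfin
        rw [← hmap] at h2
        exact h2.comp_measurable measurable_snd
      exact (h1.const_mul _).const_mul _
    apply Integrable.mono' hg hFm.aestronglyMeasurable
    rw [hprod_restrict]
    filter_upwards [ae_restrict_mem (hXmeas.prod hXmeas)] with p hp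
    obtain ⟨hp1, hp2⟩ := hp
    rw [Real.norm_eq_abs, show Function.uncurry F p = F p.1 p.2 from rfl,
      abs_of_nonneg (hFnn p.1 hp1 p.2)]
    exact hbound2 p.1 hp1 p.2 hp2
  -- rewrite and swap the integrals
  have hswap : (∫ z in X, (∫ x in X, q x * (Kδ z x * u z / π z) ^ 2) * π z)
      = ∫ x in X, ∫ z in X, F z x := by
    calc (∫ z in X, (∫ x in X, q x * (Kδ z x * u z / π z) ^ 2) * π z)
        = ∫ z in X, ∫ x in X, F z x := by
          apply integral_congr_ae
          filter_upwards with z using hKF z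
      _ = ∫ x in X, ∫ z in X, F z x := integral_integral_swap hFint
  rw [hswap]
  -- bound the inner integral for each x ∈ X
  have hinner : ∀ x ∈ X, (∫ z in X, F z x) ≤ q x * ((cm * δ ^ d)⁻¹ * lX / ε) := by
    intro x hx
    have hmx := hmpos x hx
    -- the dominating function
    set G : EuclideanSpace ℝ (Fin d) → ℝ := fun z =>
      ((cm * δ ^ d)⁻¹ * lX / ε) * (q x * ((m x)⁻¹ * (if dist z x ≤ δ then (1:ℝ) else 0))) with hGdef
    have hGint : IntegrableOn G X volume := by
      have hind : IntegrableOn (fun z : EuclideanSpace ℝ (Fin d) => if dist z x ≤ δ then (1:ℝ) else 0) X volume := by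
        have : (fun z : EuclideanSpace ℝ (Fin d) => if dist z x ≤ δ then (1:ℝ) else 0)
            = Set.indicator (Metric.closedBall x δ) (fun _ => (1:ℝ)) := by
          funext z
          simp [Set.indicator_apply, Metric.mem_closedBall]
        rw [this]
        exact (integrableOn_const hXc.measure_lt_top.ne).indicator
          Metric.isClosed_closedBall.measurableSet
      simpa [hGdef, mul_assoc, IntegrableOn] using ((hind.const_mul ((m x)⁻¹)).const_mul (q x)).const_mul
        ((cm * δ ^ d)⁻¹ * lX / ε)
    have h1 : (∫ z in X, F z x) ≤ ∫ z in X, G z := by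
      apply integral_mono_of_nonneg ?_ hGint ?_
      · filter_upwards [ae_restrict_mem hXmeas] with z hz
        exact hFnn z hz x
      · filter_upwards [ae_restrict_mem hXmeas] with z hz
        exact hbound z hz x hx
    have h2 : (∫ z in X, G z) = q x * ((cm * δ ^ d)⁻¹ * lX / ε) := by
      have hind : (∫ z in X, (if dist z x ≤ δ then (1:ℝ) else 0)) = m x := by
        have heq : (fun z : EuclideanSpace ℝ (Fin d) => if dist z x ≤ δ then (1:ℝ) else 0)
            = Set.indicator (Metric.closedBall x δ) (fun _ => (1:ℝ)) := by
          funext z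
          simp [Set.indicator_apply, Metric.mem_closedBall]
        rw [show (∫ z in X, (if dist z x ≤ δ then (1:ℝ) else 0))
            = ∫ z in X, Set.indicator (Metric.closedBall x δ) (fun _ => (1:ℝ)) z from by
          rw [heq]]
        rw [setIntegral_indicator Metric.isClosed_closedBall.measurableSet]
        rw [setIntegral_const]
        rw [Set.inter_comm]
        simp [hmdef, Measure.real]
      calc (∫ z in X, G z)
          = ((cm * δ ^ d)⁻¹ * lX / ε) * (q x * ((m x)⁻¹ *
              (∫ z in X, (if dist z x ≤ δ then (1:ℝ) else 0)))) := by
            simp only [hGdef]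
            rw [integral_const_mul, integral_const_mul, integral_const_mul]
        _ = q x * ((cm * δ ^ d)⁻¹ * lX / ε) := by
            rw [hind, inv_mul_cancel₀ (ne_of_gt hmx)]
            ring
    rw [h2] at h1
    exact h1
  -- conclude
  have houter : (∫ x in X, ∫ z in X, F z x) ≤ (cm * δ ^ d)⁻¹ * lX / ε := by
    have h1 : (∫ x in X, ∫ z in X, F z x) ≤ ∫ x in X, q x * ((cm * δ ^ d)⁻¹ * lX / ε) := by
      apply integral_mono_of_nonneg ?_ (hq_int.mul_const _) ?_
      · filter_upwards [ae_restrict_mem hXmeas] with x hx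
        apply integral_nonneg_of_ae
        filter_upwards [ae_restrict_mem hXmeas] with z hz
        exact hFnn z hz x
      · filter_upwards [ae_restrict_mem hXmeas] with x hx
        exact hinner x hx
    calc (∫ x in X, ∫ z in X, F z x) ≤ ∫ x in X, q x * ((cm * δ ^ d)⁻¹ * lX / ε) := h1
      _ = (∫ x in X, q x) * ((cm * δ ^ d)⁻¹ * lX / ε) := integral_mul_const _ _
      _ = (cm * δ ^ d)⁻¹ * lX / ε := by rw [hq1, one_mul]
  refine houter.trans ?_
  -- arithmetic: (cm δ^d)⁻¹ lX / ε ≤ lX cM / cm² (δ^d)⁻¹ ε⁻¹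
  rw [mul_inv, div_eq_mul_inv]
  have : cm⁻¹ ≤ cM / cm ^ 2 := by
    rw [div_eq_mul_inv, sq, mul_inv]
    have : (1:ℝ) ≤ cM * cm⁻¹ := by
      rw [← div_eq_mul_inv]
      exact (one_le_div hcm).2 hcmM
    nlinarith [inv_pos.2 hcm]
  calc cm⁻¹ * (δ ^ d)⁻¹ * lX * ε⁻¹
      ≤ (cM / cm ^ 2) * (δ ^ d)⁻¹ * lX * ε⁻¹ := by
        apply mul_le_mul_of_nonneg_right _ (inv_pos.2 hε).le
        apply mul_le_mul_of_nonneg_right _ hXpos.le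
        exact mul_le_mul_of_nonneg_right this (inv_pos.2 hδd).le
    _ = lX * cM / cm ^ 2 * (δ ^ d)⁻¹ * ε⁻¹ := by ring
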